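/- Let κ ≥ 2, [n] = sin(nπ/κ)/sin(π/κ), and μ(k,l) = [k+1][l+1][k+l+2]/[2]. For integers k ≥ 0, l ≥ 1 with [l] ≠ 0 and k+l+3 < κ, the number λ = [l+2]/[l] satisfies μ(k+1,l−1)·λ + μ(k,l+1)·λ^{−1} = μ(k,l) + μ(k+1,l). -/

import Mathlib

/-- Quantum integer `[n] = sin(nπ/κ)/sin(π/κ)`. -/
noncomputable def qint (κ : ℕ) (n : ℕ) : ℝ :=
  Real.sin (n * Real.pi / κ) / Real.sin (Real.pi / κ)

/-- Quantum dimension `μ(k,l) = [k+1][l+1][k+l+2]/[2]`. -/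
noncomputable def quantumDim (κ k l : ℕ) : ℝ :=
  qint κ (k+1) * qint κ (l+1) * qint κ (k+l+2) / qint κ 2

lemma Ekey (a b s : ℝ) :
    Real.sin (b+s+s) * Real.sin (a+s+s) * Real.sin (b+a+s+s)
      + Real.sin (b+s) * Real.sin a * Real.sin (b+a+s+s+s)
    = Real.sin (b+s) * Real.sin (a+s) * Real.sin (b+a+s+s)
      + Real.sin (b+s+s) * Real.sin (a+s) * Real.sin (b+a+s+s+s) := by
  simp only [Real.sin_add, Real.cos_add]
  linear_combination (2 * Real.cos a ^2 * Real.cos b ^2 * Real.sin s ^3 * Real.cos s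
    + Real.cos a ^2 * Real.sin b * Real.cos b * (3 * Real.sin s ^2 * Real.cos s ^2 - Real.sin s ^4)
    + Real.cos a ^2 * Real.sin b ^2 * (Real.sin s * Real.cos s ^3 - Real.sin s ^3 * Real.cos s)
    + 2 * Real.sin a ^2 * Real.cos b ^2 * Real.sin s ^3 * Real.cos s
    + Real.sin a ^2 * Real.sin b * Real.cos b * (3 * Real.sin s ^2 * Real.cos s ^2 - Real.sin s ^4)
    + Real.sin a ^2 * Real.sin b ^2 * (Real.sin s * Real.cos s ^3 - Real.sin s ^3 * Real.cos s))
    * Real.sin_sq_add_cos_sq s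

lemma key (a b s : ℝ) (hs : Real.sin s ≠ 0) (h2 : Real.sin (s+s) ≠ 0)
    (ha : Real.sin a ≠ 0) (ha2 : Real.sin (a+s+s) ≠ 0) :
    Real.sin (b+s+s)/Real.sin s * (Real.sin a/Real.sin s) * (Real.sin (b+a+s+s)/Real.sin s) / (Real.sin (s+s)/Real.sin s)
      * (Real.sin (a+s+s)/Real.sin s / (Real.sin a/Real.sin s))
    + Real.sin (b+s)/Real.sin s * (Real.sin (a+s+s)/Real.sin s) * (Real.sin (b+a+s+s+s)/Real.sin s) / (Real.sin (s+s)/Real.sin s)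
      * (Real.sin (a+s+s)/Real.sin s / (Real.sin a/Real.sin s))⁻¹
    = Real.sin (b+s)/Real.sin s * (Real.sin (a+s)/Real.sin s) * (Real.sin (b+a+s+s)/Real.sin s) / (Real.sin (s+s)/Real.sin s)
    + Real.sin (b+s+s)/Real.sin s * (Real.sin (a+s)/Real.sin s) * (Real.sin (b+a+s+s+s)/Real.sin s) / (Real.sin (s+s)/Real.sin s) := by
  have E := Ekey a b s
  generalize Real.sin (s+s) = t at *
  field_simp
  linear_combination E

theorem lambda_root (κ k l : ℕ) (hκ : 2 ≤ κ) (hl : 1 ≤ l)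
    (hlne : qint κ l ≠ 0) (h : k + l + 3 < κ) :
    quantumDim κ (k+1) (l-1) * (qint κ (l+2) / qint κ l) +
      quantumDim κ k (l+1) * (qint κ (l+2) / qint κ l)⁻¹ =
      quantumDim κ k l + quantumDim κ (k+1) l := by
  obtain ⟨m, rfl⟩ : ∃ m, l = m + 1 := ⟨l - 1, by omega⟩
  have hκpos : (0:ℝ) < κ := by positivity
  have hpos : ∀ n : ℕ, 0 < n → n < κ → 0 < Real.sin (n * Real.pi / κ) := by
    intro n hn hnκ
    apply Real.sin_pos_of_pos_of_lt_pi
    · have : (0:ℝ) < (n:ℝ) := by exact_mod_cast hn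
      positivity
    · rw [div_lt_iff₀ hκpos]
      have : (n:ℝ) < κ := by exact_mod_cast hnκ
      nlinarith [Real.pi_pos]
  set s : ℝ := Real.pi / κ with hsdef
  set a : ℝ := ((m:ℝ)+1) * Real.pi / κ with hadef
  set b : ℝ := (k:ℝ) * Real.pi / κ with hbdef
  have hs : Real.sin s ≠ 0 := by
    have := hpos 1 (by omega) (by omega)
    push_cast at this; simpa [hsdef] using this.ne'
  have h2 : Real.sin (s+s) ≠ 0 := by
    have := hpos 2 (by omega) (by omega)
    push_cast at this
    have e : ((2:ℝ)) * Real.pi / κ = s + s := by rw [hsdef]; ring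
    rw [e] at this; exact this.ne'
  have ha : Real.sin a ≠ 0 := by
    have := hpos (m+1) (by omega) (by omega)
    push_cast at this
    rw [show ((m:ℝ)+1) * Real.pi / κ = a from rfl] at this; exact this.ne'
  have ha2 : Real.sin (a+s+s) ≠ 0 := by
    have := hpos (m+3) (by omega) (by omega)
    push_cast at this
    rw [show ((m:ℝ)+3) * Real.pi / κ = a+s+s from by rw [hadef, hsdef]; ring] at this
    exact this.ne'
  simp only [quantumDim, qint, Nat.add_sub_cancel]
  rw [show k+1+m+2 = k+m+3 from by omega, show k+(m+1)+2 = k+m+3 from by omega,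
      show k+(m+1+1)+2 = k+m+4 from by omega, show k+1+(m+1)+2 = k+m+4 from by omega]
  push_cast
  rw [show ((2:ℝ)) * Real.pi / κ = s + s from by rw [hsdef]; ring,
      show ((k:ℝ)+1) * Real.pi / κ = b + s from by rw [hbdef, hsdef]; ring,
      show ((k:ℝ)+1+1) * Real.pi / κ = b + s + s from by rw [hbdef, hsdef]; ring,
      show ((m:ℝ)+1+1) * Real.pi / κ = a + s from by rw [hadef, hsdef]; ring,
      show ((m:ℝ)+1+1+1) * Real.pi / κ = a + s + s from by rw [hadef, hsdef]; ring,
      show ((k:ℝ)+(m:ℝ)+3) * Real.pi / κ = b + a + s + s from by rw [hadef, hbdef, hsdef]; ring,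
      show ((k:ℝ)+(m:ℝ)+4) * Real.pi / κ = b + a + s + s + s from by rw [hadef, hbdef, hsdef]; ring,
      show ((m:ℝ)+1+2) * Real.pi / κ = a + s + s from by rw [hadef, hsdef]; ring,
      show ((m:ℝ)+1) * Real.pi / κ = a from rfl]
  have := key a b s hs h2 ha ha2
  linear_combination this
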